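/- If all k individuals replaced at separate adjacent times are merged so that two consecutive groups λ and λ+1 with t_{λ+1} < t_λ + ε_λ are combined into one group replaced at time t_{λ+1} (excluding individuals of λ+1 whose predecessor is in λ), the resulting schedule is feasible and its total cost is at most the original cost; if the excluded set is empty the new cost is strictly smaller by exactly one setup cost d. -/
import Mathlib


open Finset

/-- Feasibility: every individual is replaced in `{1,…}` no later than its failure time. -/
def Feasible {ι : Type*} (f : ι → ℕ) (τ : ι → ℕ) : Prop :=
  ∀ i, 1 ≤ τ i ∧ τ i ≤ f i

/-- Total cost: corrective cost at the failure time, preventive cost strictly earlier, plus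
one setup cost `d` per distinct replacement time used. -/
noncomputable def totalCost {ι : Type*} [Fintype ι] [DecidableEq ι] (f : ι → ℕ)
    (cpr ccr : ι → ℝ) (d : ℝ) (τ : ι → ℕ) : ℝ :=
  (∑ i, if τ i = f i then ccr i else cpr i) + d * ((Finset.univ.image τ).card : ℝ)

/-- Scenario 2 in the proof of Theorem 1: group `G1` (replaced at `t1`, with minimum
not-used-residual lifetime `ε > 1`) and group `G2` (replaced at `t2`, `t1 < t2 < t1 + ε`)
are merged: all of `G1` and of `G2 \ E` are replaced at `t2`, where `E ⊆ G2` consists of the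
individuals of `G2` whose immediate predecessor is in `G1`; these are moved to a common
later preventive time `σ`. The resulting schedule is feasible (including the
predecessor-order constraints) and its total cost is at most the original; if `E = ∅` the
new cost is smaller by exactly one setup cost `d`. -/
theorem merge_groups_reduces_cost
    {ι : Type*} [Fintype ι] [DecidableEq ι]
    (f : ι → ℕ) (cpr ccr : ι → ℝ) (d : ℝ) (pred : ι → Option ι)
    (hc : ∀ i, cpr i ≤ ccr i) (hd : 0 < d)
    (τ : ι → ℕ) (hτ : Feasible f τ)
    (hpred : ∀ i j, pred i = some j → τ j < τ i)
    (G1 G2 E : Finset ι) (t1 t2 ε : ℕ) (σ : ι → ℕ)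
    (hG1 : G1.Nonempty) (hG2 : G2.Nonempty) (hdisj : Disjoint G1 G2)
    (hε : 1 < ε) (ht12 : t1 < t2) (ht2 : t2 < t1 + ε)
    (hτG1 : ∀ i ∈ G1, τ i = t1) (hτG2 : ∀ i ∈ G2, τ i = t2)
    (hres : ∀ i ∈ G1, t1 + ε ≤ f i)
    (honly1 : ∀ i ∉ G1, τ i ≠ t1) (honly2 : ∀ i ∉ G2, τ i ≠ t2)
    (hE : ∀ i, i ∈ E ↔ i ∈ G2 ∧ ∃ j ∈ G1, pred i = some j)
    (hσ : ∀ i ∈ E, t2 < σ i ∧ σ i < f i)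
    (hσeq : ∀ i ∈ E, ∀ j ∈ E, σ i = σ j)
    (hσlt : ∀ i, ∀ j ∈ E, pred i = some j → σ j < τ i)
    (hsucc : ∀ i, i ∉ G1 → i ∉ G2 → ∀ j ∈ G1, pred i = some j → t2 < τ i) :
    Feasible f (fun i => if i ∈ G1 then t2 else if i ∈ E then σ i else τ i) ∧
    (∀ i j, pred i = some j →
      (if j ∈ G1 then t2 else if j ∈ E then σ j else τ j) <
      (if i ∈ G1 then t2 else if i ∈ E then σ i else τ i)) ∧
    totalCost f cpr ccr d (fun i => if i ∈ G1 then t2 else if i ∈ E then σ i else τ i)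
      ≤ totalCost f cpr ccr d τ ∧
    (E = ∅ →
      totalCost f cpr ccr d (fun i => if i ∈ G1 then t2 else if i ∈ E then σ i else τ i)
        = totalCost f cpr ccr d τ - d) := by
  obtain ⟨a1, ha1⟩ := hG1
  obtain ⟨a2, ha2⟩ := hG2
  set τ' : ι → ℕ := fun i => if i ∈ G1 then t2 else if i ∈ E then σ i else τ i with hτ'
  have ht1pos : 1 ≤ t1 := by have := (hτ a1).1; rw [hτG1 a1 ha1] at this; exact this
  have ht2f : ∀ i ∈ G1, t2 < f i := fun i hi => lt_of_lt_of_le ht2 (hres i hi)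
  have ht1f : ∀ i ∈ G1, t1 < f i := fun i hi => lt_of_lt_of_le (by omega) (hres i hi)
  have hEG2 : ∀ i ∈ E, i ∈ G2 := fun i hi => ((hE i).1 hi).1
  have hEf : ∀ i ∈ E, t2 < f i := fun i hi => lt_trans (hσ i hi).1 (hσ i hi).2
  have ht1im : t1 ∈ Finset.univ.image τ :=
    Finset.mem_image.2 ⟨a1, Finset.mem_univ _, hτG1 a1 ha1⟩
  have ht2im : t2 ∈ Finset.univ.image τ :=
    Finset.mem_image.2 ⟨a2, Finset.mem_univ _, hτG2 a2 ha2⟩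
  have hcardpos : 0 < (Finset.univ.image τ).card := Finset.card_pos.2 ⟨t1, ht1im⟩
  -- Feasibility
  have hfeas : Feasible f τ' := by
    intro i
    simp only [hτ']
    split_ifs with h1 h2
    · exact ⟨by omega, le_of_lt (ht2f i h1)⟩
    · exact ⟨by have := (hσ i h2).1; omega, le_of_lt (hσ i h2).2⟩
    · exact hτ i
  -- Order constraints
  have horder : ∀ i j, pred i = some j → τ' j < τ' i := by
    intro i j hp
    have hlt := hpred i j hp
    simp only [hτ']
    by_cases hj1 : j ∈ G1
    · rw [if_pos hj1]
      have hτj : τ j = t1 := hτG1 j hj1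
      by_cases hi1 : i ∈ G1
      · exfalso; have := hτG1 i hi1; omega
      · rw [if_neg hi1]
        by_cases hiE : i ∈ E
        · rw [if_pos hiE]; exact (hσ i hiE).1
        · rw [if_neg hiE]
          by_cases hi2 : i ∈ G2
          · exact absurd ((hE i).2 ⟨hi2, j, hj1, hp⟩) hiE
          · exact hsucc i hi1 hi2 j hj1 hp
    · rw [if_neg hj1]
      by_cases hjE : j ∈ E
      · rw [if_pos hjE]
        have hs := hσlt i j hjE hp
        by_cases hi1 : i ∈ G1
        · rw [if_pos hi1]; have := hτG1 i hi1; omega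
        · rw [if_neg hi1]
          by_cases hiE : i ∈ E
          · rw [if_pos hiE]
            have hτi : τ i = t2 := hτG2 i (hEG2 i hiE)
            have := (hσ i hiE).1; omega
          · rw [if_neg hiE]; exact hs
      · rw [if_neg hjE]
        by_cases hi1 : i ∈ G1
        · rw [if_pos hi1]; have := hτG1 i hi1; omega
        · rw [if_neg hi1]
          by_cases hiE : i ∈ E
          · rw [if_pos hiE]
            have hτi : τ i = t2 := hτG2 i (hEG2 i hiE)
            have := (hσ i hiE).1; omega
          · rw [if_neg hiE]; exact hlt
  -- Sum of replacement costs is unchanged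
  have hsum : (∑ i, if τ' i = f i then ccr i else cpr i)
      = ∑ i, if τ i = f i then ccr i else cpr i := by
    apply Finset.sum_congr rfl
    intro i _
    by_cases hi1 : i ∈ G1
    · have h1 : τ i = t1 := hτG1 i hi1
      have h2 := ht1f i hi1
      have h3 := ht2f i hi1
      simp only [hτ', if_pos hi1]
      rw [if_neg (by omega), if_neg (by omega)]
    · by_cases hiE : i ∈ E
      · have h2 : τ i = t2 := hτG2 i (hEG2 i hiE)
        have h3 := hEf i hiE
        have h4 := (hσ i hiE).2
        simp only [hτ', if_neg hi1, if_pos hiE]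
        rw [if_neg (by omega), if_neg (by omega)]
      · simp only [hτ', if_neg hi1, if_neg hiE]
  -- If E = ∅, the image is exactly the old image minus t1
  have himE : E = ∅ → Finset.univ.image τ' = (Finset.univ.image τ).erase t1 := by
    intro hEeq
    ext x
    simp only [Finset.mem_erase, Finset.mem_image]
    constructor
    · rintro ⟨i, -, hix⟩
      simp only [hτ', hEeq, Finset.notMem_empty, if_false] at hix
      by_cases hi1 : i ∈ G1
      · rw [if_pos hi1] at hix
        exact ⟨by omega, a2, Finset.mem_univ _, by rw [hτG2 a2 ha2, hix]⟩
      · rw [if_neg hi1] at hix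
        exact ⟨by rw [← hix]; exact honly1 i hi1, i, Finset.mem_univ _, hix⟩
    · rintro ⟨hx1, i, -, hix⟩
      have hi1 : i ∉ G1 := fun h => hx1 (by rw [← hix, hτG1 i h])
      refine ⟨i, Finset.mem_univ _, ?_⟩
      simp only [hτ', hEeq, Finset.notMem_empty, if_false, if_neg hi1]
      exact hix
  -- Card bound in general
  have hcard : (Finset.univ.image τ').card ≤ (Finset.univ.image τ).card := by
    by_cases hEne : E.Nonempty
    · obtain ⟨e, he⟩ := hEne
      have hsub : Finset.univ.image τ' ⊆ insert (σ e) ((Finset.univ.image τ).erase t1) := by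
        intro x hx
        obtain ⟨i, -, hix⟩ := Finset.mem_image.1 hx
        simp only [hτ'] at hix
        by_cases hi1 : i ∈ G1
        · rw [if_pos hi1] at hix
          exact Finset.mem_insert_of_mem (Finset.mem_erase.2
            ⟨by omega, by rw [← hix]; exact ht2im⟩)
        · rw [if_neg hi1] at hix
          by_cases hiE : i ∈ E
          · rw [if_pos hiE] at hix
            rw [← hix, hσeq i hiE e he]
            exact Finset.mem_insert_self _ _
          · rw [if_neg hiE] at hix
            exact Finset.mem_insert_of_mem (Finset.mem_erase.2
              ⟨by rw [← hix]; exact honly1 i hi1,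
               Finset.mem_image.2 ⟨i, Finset.mem_univ _, hix⟩⟩)
      calc (Finset.univ.image τ').card
          ≤ (insert (σ e) ((Finset.univ.image τ).erase t1)).card := Finset.card_le_card hsub
        _ ≤ ((Finset.univ.image τ).erase t1).card + 1 := Finset.card_insert_le _ _
        _ = (Finset.univ.image τ).card := by
            rw [Finset.card_erase_of_mem ht1im]; omega
    · have hEeq : E = ∅ := Finset.not_nonempty_iff_eq_empty.1 hEne
      rw [himE hEeq, Finset.card_erase_of_mem ht1im]
      omega
  refine ⟨hfeas, horder, ?_, ?_⟩
  · unfold totalCost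
    rw [hsum]
    have : d * ((Finset.univ.image τ').card : ℝ) ≤ d * ((Finset.univ.image τ).card : ℝ) :=
      mul_le_mul_of_nonneg_left (Nat.cast_le.2 hcard) hd.le
    linarith
  · intro hEeq
    unfold totalCost
    rw [hsum, himE hEeq, Finset.card_erase_of_mem ht1im]
    have : (((Finset.univ.image τ).card - 1 : ℕ) : ℝ) = ((Finset.univ.image τ).card : ℝ) - 1 := by
      rw [Nat.cast_sub (by omega)]; simp
    rw [this]
    ring
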